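/- Lemma 1 (Kullback–Leibler bound on the higher-order remainder): suppose there exists C > 0 such that ν(s) ≥ C for all s ∈ S. Then there exists a constant c* > 0, depending only on γ, R_max and C, such that for all policies π_old, π_new: |η₂(π_new, π_old)| ≤ (c* γ/(1−γ)) · Σ_{s∈S} d^{π_old,ν}(s) D_KL(π_old(·|s), π_new(·|s)). -/

import Mathlib

namespace VEPO

variable {S A : Type} [Fintype S] [Fintype A] [DecidableEq S] [DecidableEq A]

/-- A probability mass function on a finite type, represented as a real-valued function. -/
def IsPMF {X : Type} [Fintype X] (f : X → ℝ) : Prop :=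
  (∀ x, 0 ≤ f x) ∧ ∑ x : X, f x = 1

/-- A transition kernel: for each action-state pair `(a, s)`, a pmf `p a s` on next states. -/
def IsKernel (p : A → S → S → ℝ) : Prop := ∀ a s, IsPMF (p a s)

/-- A policy: for each state `s`, a pmf `π s` on actions. -/
def IsPolicy (π : S → A → ℝ) : Prop := ∀ s, IsPMF (π s)

/-- The `t`-step visitation probability `p_t^π(s' | a, s)`. -/
def visit (p : A → S → S → ℝ) (π : S → A → ℝ) : ℕ → A → S → S → ℝ
  | 0, _, s, s' => if s' = s then 1 else 0
  | 1, a, s, s' => p a s s'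
  | (t + 2), a, s, s' =>
      ∑ s'' : S, visit p π (t + 1) a s s'' * ∑ a'' : A, π s'' a'' * p a'' s'' s'

/-- The Q-function `Q^π(a, s)`. -/
noncomputable def Qfun (p : A → S → S → ℝ) (r : S → A → ℝ) (γ : ℝ)
    (π : S → A → ℝ) (a : A) (s : S) : ℝ :=
  r s a + ∑' t : ℕ, γ ^ (t + 1) *
    ∑ s' : S, visit p π (t + 1) a s s' * ∑ a' : A, π s' a' * r s' a'

/-- The value function `V^π(s)`. -/
noncomputable def Vfun (p : A → S → S → ℝ) (r : S → A → ℝ) (γ : ℝ)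
    (π : S → A → ℝ) (s : S) : ℝ :=
  ∑ a : A, π s a * Qfun p r γ π a s

/-- The advantage function `A^π(a, s)`. -/
noncomputable def Adv (p : A → S → S → ℝ) (r : S → A → ℝ) (γ : ℝ)
    (π : S → A → ℝ) (a : A) (s : S) : ℝ :=
  Qfun p r γ π a s - Vfun p r γ π s

/-- The conditional discounted visitation probability `d^π(s' | a, s)`. -/
noncomputable def dvisit (p : A → S → S → ℝ) (γ : ℝ) (π : S → A → ℝ)
    (s' : S) (a : A) (s : S) : ℝ :=
  (1 - γ) * ∑' t : ℕ, γ ^ t * visit p π t a s s'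

/-- The integrated discounted visitation probability `d^{π,ν}(s')`. -/
noncomputable def dnu (p : A → S → S → ℝ) (γ : ℝ) (ν : S → ℝ)
    (π : S → A → ℝ) (s' : S) : ℝ :=
  ∑ s : S, ∑ a : A, π s a * ν s * dvisit p γ π s' a s

/-- The integrated value `V(π) = Σ_s ν(s) V^π(s)`. -/
noncomputable def IntV (p : A → S → S → ℝ) (r : S → A → ℝ) (γ : ℝ) (ν : S → ℝ)
    (π : S → A → ℝ) : ℝ :=
  ∑ s : S, ν s * Vfun p r γ π s

/-- The first-order term `η₁(π₁, π₂)`. -/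
noncomputable def eta1 (p : A → S → S → ℝ) (r : S → A → ℝ) (γ : ℝ) (ν : S → ℝ)
    (π₁ π₂ : S → A → ℝ) : ℝ :=
  ∑ a : A, ∑ s : S, π₁ s a * Adv p r γ π₂ a s * dnu p γ ν π₂ s

/-- The higher-order remainder `η₂(π₁, π₂)`. -/
noncomputable def eta2 (p : A → S → S → ℝ) (r : S → A → ℝ) (γ : ℝ) (ν : S → ℝ)
    (π₁ π₂ : S → A → ℝ) : ℝ :=
  ∑ a : A, ∑ s : S, (π₁ s a - π₂ s a) * Adv p r γ π₂ a s *
    (dnu p γ ν π₁ s - dnu p γ ν π₂ s)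

/-- Total variation distance between two pmfs on a finite type. -/
noncomputable def DTV {X : Type} [Fintype X] (μ₁ μ₂ : X → ℝ) : ℝ :=
  (1 / 2) * ∑ x : X, |μ₁ x - μ₂ x|

/-- Kullback–Leibler divergence between two pmfs on a finite type, valued in `EReal`
(equal to `⊤` if `μ₁` is not absolutely continuous w.r.t. `μ₂`). -/
noncomputable def DKL {X : Type} [Fintype X] (μ₁ μ₂ : X → ℝ) : EReal :=
  ∑ x : X, (if μ₁ x = 0 then (0 : EReal)
    else if μ₂ x = 0 then (⊤ : EReal)
    else ((μ₁ x * Real.log (μ₁ x / μ₂ x) : ℝ) : EReal))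

/-- Conditional discounted stationary probability ratio `ω^π(a', s'; a, s)`. -/
noncomputable def ratio (p : A → S → S → ℝ) (γ : ℝ) (pinf : A → S → ℝ)
    (π : S → A → ℝ) (a' : A) (s' : S) (a : A) (s : S) : ℝ :=
  (1 - γ) * ((if a' = a ∧ s' = s then 1 else 0) +
    ∑' t : ℕ, γ ^ (t + 1) * (π s' a' * visit p π (t + 1) a s s')) / pinf a' s'

/-- Integrated discounted stationary probability ratio `ω^{π,ν}(a', s')`. -/
noncomputable def rationu (p : A → S → S → ℝ) (γ : ℝ) (pinf : A → S → ℝ) (ν : S → ℝ)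
    (π : S → A → ℝ) (a' : A) (s' : S) : ℝ :=
  ∑ a : A, ∑ s : S, π s a * ν s * ratio p γ pinf π a' s' a s

/-- Marginal state distribution `p̄_t^{π,ν}` at time `t` when `S₀ ~ ν` and actions follow `π`. -/
def marg (p : A → S → S → ℝ) (π : S → A → ℝ) (ν : S → ℝ) : ℕ → S → ℝ
  | 0, s' => ν s'
  | (t + 1), s' => ∑ s : S, marg p π ν t s * ∑ a : A, π s a * p a s s'

/-- Conditional discounted state–action visitation `q^π(a', s'; a, s)`. -/
noncomputable def qvisit (p : A → S → S → ℝ) (γ : ℝ) (π : S → A → ℝ)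
    (a' : A) (s' : S) (a : A) (s : S) : ℝ :=
  (1 - γ) * ((if a' = a ∧ s' = s then 1 else 0) +
    ∑' t : ℕ, γ ^ (t + 1) * (π s' a' * visit p π (t + 1) a s s'))

/-- The estimating function `ψ(o) = ψ₁ + ψ₂(o) + ψ₃(o)` evaluated at a data tuple
`o = (s, a, rr, s')`, for nuisance functions `Ṽ = Vt`, `Ã = At`, `ω̃ = ωt`
(with `ωt a' s' a s = ω̃(a',s'; a,s)`) and `d̃ = dt` (with `dt s* a s = d̃(s* | a, s)`). -/
noncomputable def psi (γ : ℝ) (ν : S → ℝ) (π πold : S → A → ℝ)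
    (Vt : S → ℝ) (At : A → S → ℝ) (ωt : A → S → A → S → ℝ) (dt : S → A → S → ℝ)
    (s : S) (a : A) (rr : ℝ) (s' : S) : ℝ :=
  let dtnu : S → ℝ := fun sstar => ∑ a0 : A, ∑ s0 : S, πold s0 a0 * ν s0 * dt sstar a0 s0
  let ωtnu : A → S → ℝ := fun a1 s1 => ∑ a0 : A, ∑ s0 : S, πold s0 a0 * ν s0 * ωt a1 s1 a0 s0
  (∑ sstar : S, dtnu sstar * ∑ astar : A, π sstar astar * At astar sstar)
  + (1 / (1 - γ)) * ∑ sstar : S, dtnu sstar * ∑ astar : A,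
      (π sstar astar - πold sstar astar) * ωt a s astar sstar *
        (rr + γ * Vt s' - Vt s - At a s)
  + (ωtnu a s / (1 - γ)) * ∑ astar : A,
      (γ * ∑ a' : A, πold s' a' * ∑ sstar : S, dt sstar a' s' * π sstar astar * At astar sstar
       - ∑ sstar : S, dt sstar a s * π sstar astar * At astar sstar
       + (1 - γ) * π s astar * At astar s)

/-- The expectation `E[ψ(O)]` of the estimating function, where `(A₀, S₀) ~ p_∞`,
`S₁ | (A₀, S₀) ~ p(· | A₀, S₀)` and `E[R₀ | A₀, S₀] = r(S₀, A₀)`;  since `ψ` is affine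
in its reward argument with a coefficient not depending on `s'`, this finite sum is
exactly the expectation of `ψ(O)`. -/
noncomputable def Epsi (p : A → S → S → ℝ) (r : S → A → ℝ) (γ : ℝ) (ν : S → ℝ)
    (pinf : A → S → ℝ) (π πold : S → A → ℝ)
    (Vt : S → ℝ) (At : A → S → ℝ) (ωt : A → S → A → S → ℝ) (dt : S → A → S → ℝ) : ℝ :=
  ∑ a : A, ∑ s : S, pinf a s * ∑ s' : S, p a s s' *
    psi γ ν π πold Vt At ωt dt s a (r s a) s'


/-! ### Auxiliary lemmas -/

section AuxLemmas

lemma log_ge_one_sub_inv {u : ℝ} (hu : 0 < u) : 1 - 1/u ≤ Real.log u := by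
  have h := Real.log_le_sub_one_of_pos (x := 1/u) (by positivity)
  rw [Real.log_div one_ne_zero (ne_of_gt hu), Real.log_one] at h
  linarith

lemma kl_term_ge {x y : ℝ} (hx : 0 ≤ x) (hy : 0 < y) :
    2*x - 2*Real.sqrt x * Real.sqrt y ≤ (if x = 0 then 0 else x * Real.log (x / y)) := by
  rcases eq_or_lt_of_le hx with h0 | hx
  · simp [← h0]
  · rw [if_neg (ne_of_gt hx)]
    have hsx : (0:ℝ) < Real.sqrt x := Real.sqrt_pos.2 hx
    have hu : (0:ℝ) < Real.sqrt (x/y) := Real.sqrt_pos.2 (by positivity)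
    have hlog : Real.log (x/y) = 2 * Real.log (Real.sqrt (x/y)) := by
      rw [Real.log_sqrt (by positivity)]; ring
    have h1 : 1 - 1/(Real.sqrt (x/y)) ≤ Real.log (Real.sqrt (x/y)) := log_ge_one_sub_inv hu
    have hinv : 1/(Real.sqrt (x/y)) = Real.sqrt y / Real.sqrt x := by
      rw [Real.sqrt_div hx.le y, one_div_div]
    rw [hinv] at h1
    calc 2*x - 2*Real.sqrt x * Real.sqrt y = x * (2 * (1 - Real.sqrt y / Real.sqrt x)) := by
          field_simp; linear_combination (-Real.sqrt y) * Real.mul_self_sqrt hx.le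
      _ ≤ x * Real.log (x/y) := by
          rw [hlog]; apply mul_le_mul_of_nonneg_left (by linarith) hx.le

/-- A Pinsker-type inequality with a crude constant:
`(∑ |μ₁ - μ₂|)² ≤ 4 · KL(μ₁, μ₂)` for pmfs with `μ₁ ≪ μ₂`. -/
lemma pinsker4 {X : Type} [Fintype X] (μ₁ μ₂ : X → ℝ)
    (h1n : ∀ x, 0 ≤ μ₁ x) (h1s : ∑ x : X, μ₁ x = 1)
    (h2n : ∀ x, 0 ≤ μ₂ x) (h2s : ∑ x : X, μ₂ x = 1)
    (hac : ∀ x, μ₂ x = 0 → μ₁ x = 0) :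
    (∑ x : X, |μ₁ x - μ₂ x|)^2 ≤
      4 * ∑ x : X, (if μ₁ x = 0 then 0 else μ₁ x * Real.log (μ₁ x / μ₂ x)) := by
  set f : X → ℝ := fun x => |Real.sqrt (μ₁ x) - Real.sqrt (μ₂ x)| with hf
  set g : X → ℝ := fun x => Real.sqrt (μ₁ x) + Real.sqrt (μ₂ x) with hg
  have habs : ∀ x, |μ₁ x - μ₂ x| = f x * g x := by
    intro x
    have : μ₁ x - μ₂ x = (Real.sqrt (μ₁ x) - Real.sqrt (μ₂ x)) * g x := by
      simp only [hg]
      have a1 := Real.sq_sqrt (h1n x); have a2 := Real.sq_sqrt (h2n x)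
      nlinarith [a1, a2]
    rw [this, abs_mul, abs_of_nonneg (by positivity : (0:ℝ) ≤ g x)]
  have hCS : (∑ x : X, |μ₁ x - μ₂ x|)^2 ≤ (∑ x : X, f x ^2) * ∑ x : X, g x ^2 := by
    calc (∑ x : X, |μ₁ x - μ₂ x|)^2 = (∑ x : X, f x * g x)^2 := by
            congr 1; exact Finset.sum_congr rfl fun x _ => habs x
      _ ≤ _ := Finset.sum_mul_sq_le_sq_mul_sq _ _ _
  have hg4 : ∑ x : X, g x ^2 ≤ 4 := by
    have hb : ∀ x, g x ^ 2 ≤ 2 * μ₁ x + 2 * μ₂ x := by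
      intro x
      have a1 := Real.sq_sqrt (h1n x); have a2 := Real.sq_sqrt (h2n x)
      have a3 := Real.sqrt_nonneg (μ₁ x); have a4 := Real.sqrt_nonneg (μ₂ x)
      simp only [hg]; nlinarith [sq_nonneg (Real.sqrt (μ₁ x) - Real.sqrt (μ₂ x))]
    calc ∑ x : X, g x ^2 ≤ ∑ x : X, (2 * μ₁ x + 2 * μ₂ x) := Finset.sum_le_sum fun x _ => hb x
      _ = 4 := by rw [Finset.sum_add_distrib, ← Finset.mul_sum, ← Finset.mul_sum, h1s, h2s]; norm_num
  have hfkl : ∑ x : X, f x ^2 ≤ ∑ x : X, (if μ₁ x = 0 then 0 else μ₁ x * Real.log (μ₁ x / μ₂ x)) := by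
    have key : ∀ x, f x ^ 2 ≤ (μ₂ x - μ₁ x) + (2 * μ₁ x - 2 * Real.sqrt (μ₁ x) * Real.sqrt (μ₂ x)) := by
      intro x
      have a1 := Real.sq_sqrt (h1n x); have a2 := Real.sq_sqrt (h2n x)
      simp only [hf, sq_abs]; nlinarith [a1, a2]
    have key2 : ∀ x, f x ^ 2 - (μ₂ x - μ₁ x) ≤ (if μ₁ x = 0 then 0 else μ₁ x * Real.log (μ₁ x / μ₂ x)) := by
      intro x
      rcases eq_or_lt_of_le (h2n x) with h0 | hpos
      · have h10 : μ₁ x = 0 := hac x h0.symm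
        simp [hf, h10, ← h0]
      · exact le_trans (by linarith [key x]) (kl_term_ge (h1n x) hpos)
    have hsum : (∑ x : X, (f x ^ 2 - (μ₂ x - μ₁ x))) ≤
        ∑ x : X, (if μ₁ x = 0 then 0 else μ₁ x * Real.log (μ₁ x / μ₂ x)) :=
      Finset.sum_le_sum (fun x _ => key2 x)
    rw [Finset.sum_sub_distrib, Finset.sum_sub_distrib, h1s, h2s] at hsum
    linarith
  have hfnn : 0 ≤ ∑ x : X, f x ^2 := Finset.sum_nonneg fun x _ => sq_nonneg _
  calc (∑ x : X, |μ₁ x - μ₂ x|)^2 ≤ (∑ x : X, f x ^2) * ∑ x : X, g x ^2 := hCS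
    _ ≤ (∑ x : X, f x ^2) * 4 := mul_le_mul_of_nonneg_left hg4 hfnn
    _ ≤ _ := by linarith [hfkl]

/-- Real coercion into `EReal` as an additive monoid hom. -/
noncomputable def erealHom : ℝ →+ EReal :=
  ⟨⟨(fun x => (x : EReal)), EReal.coe_zero⟩, fun x y => EReal.coe_add x y⟩

lemma ereal_coe_sum {ι : Type*} (s : Finset ι) (f : ι → ℝ) :
    ((∑ i ∈ s, f i : ℝ) : EReal) = ∑ i ∈ s, ((f i : ℝ) : EReal) :=
  map_sum erealHom f s

lemma ereal_sum_ne_bot {ι : Type*} (s : Finset ι) (f : ι → EReal)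
    (h : ∀ i ∈ s, f i ≠ ⊥) : ∑ i ∈ s, f i ≠ ⊥ := by
  classical
  induction s using Finset.cons_induction with
  | empty => simp
  | cons a s ha ih =>
    rw [Finset.sum_cons]
    intro hbot
    rcases EReal.add_eq_bot_iff.1 hbot with h1 | h2
    · exact h a (Finset.mem_cons_self a s) h1
    · exact ih (fun i hi => h i (Finset.mem_cons_of_mem hi)) h2

lemma ereal_sum_eq_top {ι : Type*} [DecidableEq ι] (s : Finset ι) (f : ι → EReal)
    {i : ι} (hi : i ∈ s) (htop : f i = ⊤) (hb : ∀ j ∈ s, f j ≠ ⊥) :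
    ∑ j ∈ s, f j = ⊤ := by
  rw [← Finset.add_sum_erase s f hi, htop]
  exact EReal.top_add_of_ne_bot (ereal_sum_ne_bot _ _ fun j hj => hb j (Finset.mem_of_mem_erase hj))

lemma ereal_coe_mul_ne_bot {c : ℝ} (hc : 0 ≤ c) {x : EReal} (hx : x ≠ ⊥) :
    ((c : ℝ) : EReal) * x ≠ ⊥ := by
  induction x using EReal.rec with
  | bot => exact absurd rfl hx
  | coe y => rw [← EReal.coe_mul]; exact EReal.coe_ne_bot _
  | top =>
    rcases eq_or_lt_of_le hc with h0 | hpos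
    · rw [← h0]; simp
    · rw [EReal.mul_top_of_pos (by exact_mod_cast hpos)]; simp

/-- A pmf-weighted average of numbers bounded by `B` in absolute value is bounded by `B`. -/
lemma pmf_weighted_abs_le {X : Type} [Fintype X] {w f : X → ℝ} {B : ℝ}
    (hwn : ∀ x, 0 ≤ w x) (hws : ∑ x : X, w x = 1) (hf : ∀ x, |f x| ≤ B) :
    |∑ x : X, w x * f x| ≤ B := by
  calc |∑ x : X, w x * f x| ≤ ∑ x : X, |w x * f x| := Finset.abs_sum_le_sum_abs _ _
    _ ≤ ∑ x : X, w x * B := Finset.sum_le_sum fun x _ => by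
        rw [abs_mul, abs_of_nonneg (hwn x)]
        exact mul_le_mul_of_nonneg_left (hf x) (hwn x)
    _ = B := by rw [← Finset.sum_mul, hws, one_mul]

lemma abs_tsum_le_tsum {f g : ℕ → ℝ} (h : ∀ t, |f t| ≤ g t) (hg : Summable g) :
    |∑' t, f t| ≤ ∑' t, g t := by
  have hfa : Summable fun t => |f t| := hg.of_nonneg_of_le (fun t => abs_nonneg _) h
  have hf : Summable f := by
    refine Summable.of_norm ?_ ; simpa [Real.norm_eq_abs] using hfa
  have h1 : ‖∑' t, f t‖ ≤ ∑' t, ‖f t‖ :=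
    norm_tsum_le_tsum_norm (by simpa [Real.norm_eq_abs] using hfa)
  rw [Real.norm_eq_abs] at h1
  refine h1.trans ?_
  have : ∑' t, ‖f t‖ = ∑' t, |f t| := by simp [Real.norm_eq_abs]
  rw [this]
  exact Summable.tsum_le_tsum h hfa hg

end AuxLemmas

section MDPLemmas

variable {S A : Type} [Fintype S] [Fintype A] [DecidableEq S] [DecidableEq A]

lemma visit_nonneg {p : A → S → S → ℝ} {π : S → A → ℝ} (hp : IsKernel p) (hπ : IsPolicy π) :
    ∀ (t : ℕ) (a : A) (s s' : S), 0 ≤ visit p π t a s s' := by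
  intro t
  induction t with
  | zero => intro a s s'; simp only [visit]; split <;> norm_num
  | succ n ih =>
    cases n with
    | zero => intro a s s'; exact (hp a s).1 s'
    | succ m =>
      intro a s s'
      simp only [visit]
      exact Finset.sum_nonneg fun s'' _ => mul_nonneg (ih a s s'')
        (Finset.sum_nonneg fun a'' _ => mul_nonneg ((hπ s'').1 a'') ((hp a'' s'').1 s'))

lemma K_sum {p : A → S → S → ℝ} {π : S → A → ℝ} (hp : IsKernel p) (hπ : IsPolicy π) (s'' : S) :
    ∑ s' : S, ∑ a : A, π s'' a * p a s'' s' = 1 := by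
  rw [Finset.sum_comm]
  calc ∑ a : A, ∑ s' : S, π s'' a * p a s'' s'
      = ∑ a : A, π s'' a * ∑ s' : S, p a s'' s' := by
        exact Finset.sum_congr rfl fun a _ => (Finset.mul_sum _ _ _).symm
    _ = 1 := by
        rw [Finset.sum_congr rfl fun a _ => by rw [(hp a s'').2, mul_one]]
        exact (hπ s'').2

lemma visit_sum {p : A → S → S → ℝ} {π : S → A → ℝ} (hp : IsKernel p) (hπ : IsPolicy π) :
    ∀ (t : ℕ) (a : A) (s : S), ∑ s' : S, visit p π t a s s' = 1 := by
  intro t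
  induction t with
  | zero => intro a s; simp [visit]
  | succ n ih =>
    cases n with
    | zero => intro a s; exact (hp a s).2
    | succ m =>
      intro a s
      simp only [visit]
      rw [Finset.sum_comm]
      calc ∑ s'' : S, ∑ s' : S, visit p π (m+1) a s s'' * ∑ a'' : A, π s'' a'' * p a'' s'' s'
          = ∑ s'' : S, visit p π (m+1) a s s'' * 1 := by
            refine Finset.sum_congr rfl fun s'' _ => ?_
            rw [← Finset.mul_sum, K_sum hp hπ s'']
        _ = 1 := by simpa using ih a s

lemma visit_le_one {p : A → S → S → ℝ} {π : S → A → ℝ} (hp : IsKernel p) (hπ : IsPolicy π)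
    (t : ℕ) (a : A) (s s' : S) : visit p π t a s s' ≤ 1 := by
  have h := Finset.single_le_sum (f := fun s' => visit p π t a s s')
    (fun x _ => visit_nonneg hp hπ t a s x) (Finset.mem_univ s')
  rw [visit_sum hp hπ t a s] at h
  exact h

lemma Q_abs_le {p : A → S → S → ℝ} {r : S → A → ℝ} {γ Rmax : ℝ} {π : S → A → ℝ}
    (hp : IsKernel p) (hπ : IsPolicy π) (hr : ∀ s a, |r s a| ≤ Rmax)
    (hγ0 : 0 ≤ γ) (hγ1 : γ < 1) (a : A) (s : S) :
    |Qfun p r γ π a s| ≤ Rmax / (1 - γ) := by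
  have hRnn : 0 ≤ Rmax := le_trans (abs_nonneg _) (hr s a)
  have hinner : ∀ t : ℕ, |∑ s' : S, visit p π (t+1) a s s' * ∑ a' : A, π s' a' * r s' a'| ≤ Rmax := by
    intro t
    exact pmf_weighted_abs_le (fun s' => visit_nonneg hp hπ (t+1) a s s')
      (visit_sum hp hπ (t+1) a s) (fun s' => pmf_weighted_abs_le (hπ s').1 (hπ s').2 (hr s'))
  have hbound : ∀ t : ℕ, |γ ^ (t+1) * ∑ s' : S, visit p π (t+1) a s s' * ∑ a' : A, π s' a' * r s' a'|
      ≤ (γ * Rmax) * γ ^ t := by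
    intro t
    calc |γ ^ (t+1) * ∑ s' : S, visit p π (t+1) a s s' * ∑ a' : A, π s' a' * r s' a'|
        = γ ^ (t+1) * |∑ s' : S, visit p π (t+1) a s s' * ∑ a' : A, π s' a' * r s' a'| := by
          rw [abs_mul, abs_pow, abs_of_nonneg hγ0]
      _ ≤ γ ^ (t+1) * Rmax := mul_le_mul_of_nonneg_left (hinner t) (pow_nonneg hγ0 _)
      _ = (γ * Rmax) * γ ^ t := by ring
  have h1γ : (0:ℝ) < 1 - γ := by linarith
  have hsum : Summable fun t : ℕ => (γ * Rmax) * γ ^ t :=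
    (summable_geometric_of_lt_one hγ0 hγ1).mul_left _
  have htsum : |∑' t : ℕ, γ ^ (t+1) * ∑ s' : S, visit p π (t+1) a s s' * ∑ a' : A, π s' a' * r s' a'|
      ≤ γ * Rmax * (1 - γ)⁻¹ := by
    refine (abs_tsum_le_tsum hbound hsum).trans_eq ?_
    rw [tsum_mul_left, tsum_geometric_of_lt_one hγ0 hγ1]
  have heq : Rmax + γ * Rmax * (1 - γ)⁻¹ = Rmax / (1 - γ) := by
    field_simp
    ring
  calc |Qfun p r γ π a s| ≤ |r s a| + |∑' t : ℕ, γ ^ (t+1) *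
        ∑ s' : S, visit p π (t+1) a s s' * ∑ a' : A, π s' a' * r s' a'| := abs_add_le _ _
    _ ≤ Rmax + γ * Rmax * (1 - γ)⁻¹ := add_le_add (hr s a) htsum
    _ = Rmax / (1 - γ) := heq

lemma Adv_abs_le {p : A → S → S → ℝ} {r : S → A → ℝ} {γ Rmax : ℝ} {π : S → A → ℝ}
    (hp : IsKernel p) (hπ : IsPolicy π) (hr : ∀ s a, |r s a| ≤ Rmax)
    (hγ0 : 0 ≤ γ) (hγ1 : γ < 1) (a : A) (s : S) :
    |Adv p r γ π a s| ≤ 2 * Rmax / (1 - γ) := by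
  have hV : |Vfun p r γ π s| ≤ Rmax / (1 - γ) :=
    pmf_weighted_abs_le (hπ s).1 (hπ s).2 (fun a' => Q_abs_le hp hπ hr hγ0 hγ1 a' s)
  calc |Adv p r γ π a s| ≤ |Qfun p r γ π a s| + |Vfun p r γ π s| := abs_sub _ _
    _ ≤ Rmax / (1 - γ) + Rmax / (1 - γ) := add_le_add (Q_abs_le hp hπ hr hγ0 hγ1 a s) hV
    _ = 2 * Rmax / (1 - γ) := by ring

/-- The marginal distribution at time `t` of the chain started from `ν`, acting
according to `π` (first action included). -/
noncomputable def muV (p : A → S → S → ℝ) (π : S → A → ℝ) (ν : S → ℝ) (t : ℕ) (s' : S) : ℝ :=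
  ∑ s : S, ∑ a : A, π s a * ν s * visit p π t a s s'

lemma muV_nonneg {p : A → S → S → ℝ} {π : S → A → ℝ} {ν : S → ℝ}
    (hp : IsKernel p) (hπ : IsPolicy π) (hν : ∀ s, 0 ≤ ν s) (t : ℕ) (s' : S) :
    0 ≤ muV p π ν t s' :=
  Finset.sum_nonneg fun s _ => Finset.sum_nonneg fun a _ =>
    mul_nonneg (mul_nonneg ((hπ s).1 a) (hν s)) (visit_nonneg hp hπ t a s s')

lemma muV_sum {p : A → S → S → ℝ} {π : S → A → ℝ} {ν : S → ℝ}
    (hp : IsKernel p) (hπ : IsPolicy π) (hν : IsPMF ν) (t : ℕ) :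
    ∑ s' : S, muV p π ν t s' = 1 := by
  unfold muV
  rw [Finset.sum_comm]
  calc ∑ s : S, ∑ s' : S, ∑ a : A, π s a * ν s * visit p π t a s s'
      = ∑ s : S, ν s := by
        refine Finset.sum_congr rfl fun s _ => ?_
        rw [Finset.sum_comm]
        calc ∑ a : A, ∑ s' : S, π s a * ν s * visit p π t a s s'
            = ∑ a : A, π s a * ν s := by
              refine Finset.sum_congr rfl fun a _ => ?_
              rw [← Finset.mul_sum, visit_sum hp hπ t a s, mul_one]
          _ = ν s := by rw [← Finset.sum_mul, (hπ s).2, one_mul]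
    _ = 1 := hν.2

lemma muV_le_one {p : A → S → S → ℝ} {π : S → A → ℝ} {ν : S → ℝ}
    (hp : IsKernel p) (hπ : IsPolicy π) (hν : IsPMF ν) (t : ℕ) (s' : S) :
    muV p π ν t s' ≤ 1 := by
  have h := Finset.single_le_sum (f := fun x => muV p π ν t x)
    (fun x _ => muV_nonneg hp hπ hν.1 t x) (Finset.mem_univ s')
  rw [muV_sum hp hπ hν t] at h
  exact h

lemma muV_zero {p : A → S → S → ℝ} {π : S → A → ℝ} {ν : S → ℝ}
    (hπ : IsPolicy π) (s' : S) : muV p π ν 0 s' = ν s' := by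
  unfold muV
  calc ∑ s : S, ∑ a : A, π s a * ν s * visit p π 0 a s s'
      = ∑ s : S, (if s' = s then ν s else 0) := by
        refine Finset.sum_congr rfl fun s _ => ?_
        simp only [visit]
        split
        · rw [← Finset.sum_mul, ← Finset.sum_mul, (hπ s).2]; ring
        · simp
    _ = ν s' := by simp

end MDPLemmas

lemma muV_succ {p : A → S → S → ℝ} {π : S → A → ℝ} {ν : S → ℝ}
    (hπ : IsPolicy π) (t : ℕ) (s' : S) :
    muV p π ν (t+1) s' = ∑ s'' : S, muV p π ν t s'' * ∑ a'' : A, π s'' a'' * p a'' s'' s' := by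
  cases t with
  | zero =>
    unfold muV
    calc ∑ s : S, ∑ a : A, π s a * ν s * visit p π 1 a s s'
        = ∑ s : S, ν s * ∑ a : A, π s a * p a s s' := by
          refine Finset.sum_congr rfl fun s _ => ?_
          rw [Finset.mul_sum]
          refine Finset.sum_congr rfl fun a _ => ?_
          show π s a * ν s * p a s s' = ν s * (π s a * p a s s')
          ring
      _ = ∑ s'' : S, (∑ s : S, ∑ a : A, π s a * ν s * visit p π 0 a s s'') *
            ∑ a'' : A, π s'' a'' * p a'' s'' s' := by
          refine Finset.sum_congr rfl fun s _ => ?_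
          congr 1
          exact (muV_zero hπ s).symm
  | succ m =>
    unfold muV
    simp only [visit]
    calc ∑ s : S, ∑ a : A, π s a * ν s *
          ∑ s'' : S, visit p π (m+1) a s s'' * ∑ a'' : A, π s'' a'' * p a'' s'' s'
        = ∑ s : S, ∑ a : A, ∑ s'' : S, (π s a * ν s * visit p π (m+1) a s s'') *
            ∑ a'' : A, π s'' a'' * p a'' s'' s' := by
          refine Finset.sum_congr rfl fun s _ => Finset.sum_congr rfl fun a _ => ?_
          rw [Finset.mul_sum]
          exact Finset.sum_congr rfl fun s'' _ => by ring
      _ = ∑ s : S, ∑ s'' : S, ∑ a : A, (π s a * ν s * visit p π (m+1) a s s'') *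
            ∑ a'' : A, π s'' a'' * p a'' s'' s' :=
          Finset.sum_congr rfl fun s _ => Finset.sum_comm
      _ = ∑ s'' : S, ∑ s : S, ∑ a : A, (π s a * ν s * visit p π (m+1) a s s'') *
            ∑ a'' : A, π s'' a'' * p a'' s'' s' := Finset.sum_comm
      _ = ∑ s'' : S, (∑ s : S, ∑ a : A, π s a * ν s * visit p π (m+1) a s s'') *
            ∑ a'' : A, π s'' a'' * p a'' s'' s' := by
          refine Finset.sum_congr rfl fun s'' _ => ?_
          rw [Finset.sum_mul]
          exact Finset.sum_congr rfl fun s _ => (Finset.sum_mul _ _ _).symm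
      _ = _ := rfl

lemma muV_diff [Nonempty S] {p : A → S → S → ℝ} {π₁ π₂ : S → A → ℝ} {ν : S → ℝ} {M : ℝ}
    (hp : IsKernel p) (h1 : IsPolicy π₁) (h2 : IsPolicy π₂) (hν : IsPMF ν)
    (hM : ∀ s : S, ∑ a : A, |π₁ s a - π₂ s a| ≤ M) :
    ∀ t : ℕ, ∑ s' : S, |muV p π₁ ν t s' - muV p π₂ ν t s'| ≤ t * M := by
  have hMnn : 0 ≤ M := by
    obtain ⟨s⟩ := (inferInstance : Nonempty S)
    exact le_trans (Finset.sum_nonneg fun a _ => abs_nonneg _) (hM s)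
  intro t
  induction t with
  | zero =>
    simp [muV_zero h1, muV_zero h2]
  | succ t ih =>
    have key : ∀ s' : S, |muV p π₁ ν (t+1) s' - muV p π₂ ν (t+1) s'| ≤
        (∑ s'' : S, |muV p π₁ ν t s'' - muV p π₂ ν t s''| * ∑ a : A, π₁ s'' a * p a s'' s')
        + ∑ s'' : S, muV p π₂ ν t s'' * ∑ a : A, |π₁ s'' a - π₂ s'' a| * p a s'' s' := by
      intro s'
      rw [muV_succ h1, muV_succ h2]
      have hsplit : (∑ s'' : S, muV p π₁ ν t s'' * ∑ a : A, π₁ s'' a * p a s'' s')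
          - (∑ s'' : S, muV p π₂ ν t s'' * ∑ a : A, π₂ s'' a * p a s'' s')
          = (∑ s'' : S, (muV p π₁ ν t s'' - muV p π₂ ν t s'') * ∑ a : A, π₁ s'' a * p a s'' s')
          + ∑ s'' : S, muV p π₂ ν t s'' * ∑ a : A, (π₁ s'' a - π₂ s'' a) * p a s'' s' := by
        rw [← Finset.sum_add_distrib, ← Finset.sum_sub_distrib]
        refine Finset.sum_congr rfl fun s'' _ => ?_
        have h3 : ∑ a : A, (π₁ s'' a - π₂ s'' a) * p a s'' s'
            = (∑ a : A, π₁ s'' a * p a s'' s') - ∑ a : A, π₂ s'' a * p a s'' s' := by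
          rw [← Finset.sum_sub_distrib]
          exact Finset.sum_congr rfl fun a _ => sub_mul _ _ _
        rw [h3]; ring
      rw [hsplit]
      refine (abs_add_le _ _).trans (add_le_add ?_ ?_)
      · refine (Finset.abs_sum_le_sum_abs _ _).trans (Finset.sum_le_sum fun s'' _ => ?_)
        rw [abs_mul]
        refine mul_le_mul_of_nonneg_left ?_ (abs_nonneg _)
        rw [abs_of_nonneg (Finset.sum_nonneg fun a _ =>
          mul_nonneg ((h1 s'').1 a) ((hp a s'').1 s'))]
      · refine (Finset.abs_sum_le_sum_abs _ _).trans (Finset.sum_le_sum fun s'' _ => ?_)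
        rw [abs_mul, abs_of_nonneg (muV_nonneg hp h2 hν.1 t s'')]
        refine mul_le_mul_of_nonneg_left ?_ (muV_nonneg hp h2 hν.1 t s'')
        refine (Finset.abs_sum_le_sum_abs _ _).trans (Finset.sum_le_sum fun a _ => ?_)
        rw [abs_mul, abs_of_nonneg ((hp a s'').1 s')]
    calc ∑ s' : S, |muV p π₁ ν (t+1) s' - muV p π₂ ν (t+1) s'|
        ≤ ∑ s' : S, ((∑ s'' : S, |muV p π₁ ν t s'' - muV p π₂ ν t s''| * ∑ a : A, π₁ s'' a * p a s'' s')
          + ∑ s'' : S, muV p π₂ ν t s'' * ∑ a : A, |π₁ s'' a - π₂ s'' a| * p a s'' s') :=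
          Finset.sum_le_sum fun s' _ => key s'
      _ = (∑ s'' : S, |muV p π₁ ν t s'' - muV p π₂ ν t s''| * ∑ s' : S, ∑ a : A, π₁ s'' a * p a s'' s')
          + ∑ s'' : S, muV p π₂ ν t s'' * ∑ s' : S, ∑ a : A, |π₁ s'' a - π₂ s'' a| * p a s'' s' := by
          rw [Finset.sum_add_distrib]
          congr 1
          · rw [Finset.sum_comm]
            exact Finset.sum_congr rfl fun s'' _ => (Finset.mul_sum _ _ _).symm
          · rw [Finset.sum_comm]
            exact Finset.sum_congr rfl fun s'' _ => (Finset.mul_sum _ _ _).symm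
      _ ≤ t * M + M := by
          refine add_le_add ?_ ?_
          · calc ∑ s'' : S, |muV p π₁ ν t s'' - muV p π₂ ν t s''| * ∑ s' : S, ∑ a : A, π₁ s'' a * p a s'' s'
                = ∑ s'' : S, |muV p π₁ ν t s'' - muV p π₂ ν t s''| := by
                  refine Finset.sum_congr rfl fun s'' _ => ?_
                  rw [K_sum hp h1 s'', mul_one]
              _ ≤ t * M := ih
          · calc ∑ s'' : S, muV p π₂ ν t s'' * ∑ s' : S, ∑ a : A, |π₁ s'' a - π₂ s'' a| * p a s'' s'
                ≤ ∑ s'' : S, muV p π₂ ν t s'' * M := by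
                  refine Finset.sum_le_sum fun s'' _ => ?_
                  refine mul_le_mul_of_nonneg_left ?_ (muV_nonneg hp h2 hν.1 t s'')
                  rw [Finset.sum_comm]
                  calc ∑ a : A, ∑ s' : S, |π₁ s'' a - π₂ s'' a| * p a s'' s'
                      = ∑ a : A, |π₁ s'' a - π₂ s'' a| := by
                        refine Finset.sum_congr rfl fun a _ => ?_
                        rw [← Finset.mul_sum, (hp a s'').2, mul_one]
                    _ ≤ M := hM s''
              _ = M := by rw [← Finset.sum_mul, muV_sum hp h2 hν t, one_mul]
      _ = (↑(t+1) : ℝ) * M := by push_cast; ring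

lemma summable_geom_of_abs_le {γ B : ℝ} (hγ0 : 0 ≤ γ) (hγ1 : γ < 1) {f : ℕ → ℝ}
    (hf : ∀ t, |f t| ≤ B) : Summable fun t => γ ^ t * f t := by
  refine Summable.of_norm_bounded (g := fun t => B * γ ^ t)
    ((summable_geometric_of_lt_one hγ0 hγ1).mul_left B) fun t => ?_
  rw [norm_mul, norm_pow, Real.norm_eq_abs γ, Real.norm_eq_abs, abs_of_nonneg hγ0]
  calc γ^t * |f t| ≤ γ^t * B := mul_le_mul_of_nonneg_left (hf t) (pow_nonneg hγ0 t)
    _ = B * γ^t := mul_comm _ _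

lemma summable_geom_visit {γ : ℝ} (hγ0 : 0 ≤ γ) (hγ1 : γ < 1)
    {p : A → S → S → ℝ} {π : S → A → ℝ} (hp : IsKernel p) (hπ : IsPolicy π) (a : A) (s s' : S) :
    Summable fun t => γ ^ t * visit p π t a s s' :=
  summable_geom_of_abs_le hγ0 hγ1 (B := 1) fun t => by
    rw [abs_of_nonneg (visit_nonneg hp hπ t a s s')]
    exact visit_le_one hp hπ t a s s'

lemma dnu_eq {γ : ℝ} (hγ0 : 0 ≤ γ) (hγ1 : γ < 1)
    {p : A → S → S → ℝ} {π : S → A → ℝ} {ν : S → ℝ} (hp : IsKernel p) (hπ : IsPolicy π)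
    (s' : S) : dnu p γ ν π s' = (1 - γ) * ∑' t : ℕ, γ ^ t * muV p π ν t s' := by
  have h1 : ∀ (s : S) (a : A), Summable fun t => π s a * ν s * (γ^t * visit p π t a s s') :=
    fun s a => (summable_geom_visit hγ0 hγ1 hp hπ a s s').mul_left _
  calc dnu p γ ν π s'
      = ∑ s : S, ∑ a : A, (1 - γ) * ∑' t : ℕ, π s a * ν s * (γ^t * visit p π t a s s') := by
        unfold dnu dvisit
        refine Finset.sum_congr rfl fun s _ => Finset.sum_congr rfl fun a _ => ?_
        rw [tsum_mul_left]; ring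
    _ = (1 - γ) * ∑ s : S, ∑ a : A, ∑' t : ℕ, π s a * ν s * (γ^t * visit p π t a s s') := by
        rw [Finset.mul_sum]
        exact Finset.sum_congr rfl fun s _ => (Finset.mul_sum _ _ _).symm
    _ = (1 - γ) * ∑ s : S, ∑' t : ℕ, ∑ a : A, π s a * ν s * (γ^t * visit p π t a s s') := by
        congr 1
        exact Finset.sum_congr rfl fun s _ => (Summable.tsum_finsetSum fun a _ => h1 s a).symm
    _ = (1 - γ) * ∑' t : ℕ, ∑ s : S, ∑ a : A, π s a * ν s * (γ^t * visit p π t a s s') := by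
        congr 1
        exact (Summable.tsum_finsetSum fun s _ => summable_sum fun a _ => h1 s a).symm
    _ = (1 - γ) * ∑' t : ℕ, γ ^ t * muV p π ν t s' := by
        congr 1
        refine tsum_congr fun t => ?_
        unfold muV
        rw [Finset.mul_sum]
        refine Finset.sum_congr rfl fun s _ => ?_
        rw [Finset.mul_sum]
        exact Finset.sum_congr rfl fun a _ => by ring

lemma summable_geom_muV {γ : ℝ} (hγ0 : 0 ≤ γ) (hγ1 : γ < 1)
    {p : A → S → S → ℝ} {π : S → A → ℝ} {ν : S → ℝ} (hp : IsKernel p) (hπ : IsPolicy π)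
    (hν : IsPMF ν) (s' : S) : Summable fun t => γ ^ t * muV p π ν t s' :=
  summable_geom_of_abs_le hγ0 hγ1 (B := 1) fun t => by
    rw [abs_of_nonneg (muV_nonneg hp hπ hν.1 t s')]
    exact muV_le_one hp hπ hν t s'

lemma dnu_ge {γ : ℝ} (hγ0 : 0 ≤ γ) (hγ1 : γ < 1)
    {p : A → S → S → ℝ} {π : S → A → ℝ} {ν : S → ℝ} (hp : IsKernel p) (hπ : IsPolicy π)
    (hν : IsPMF ν) (s' : S) : (1 - γ) * ν s' ≤ dnu p γ ν π s' := by
  rw [dnu_eq hγ0 hγ1 hp hπ s']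
  have h0 : γ ^ 0 * muV p π ν 0 s' = ν s' := by
    rw [pow_zero, one_mul, muV_zero hπ]
  have hle : ν s' ≤ ∑' t : ℕ, γ ^ t * muV p π ν t s' := by
    rw [← h0]
    exact Summable.le_tsum (summable_geom_muV hγ0 hγ1 hp hπ hν s') 0 fun j _ =>
      mul_nonneg (pow_nonneg hγ0 j) (muV_nonneg hp hπ hν.1 j s')
  exact mul_le_mul_of_nonneg_left hle (by linarith)

lemma dnu_diff [Nonempty S] {γ M : ℝ} (hγ0 : 0 ≤ γ) (hγ1 : γ < 1)
    {p : A → S → S → ℝ} {π₁ π₂ : S → A → ℝ} {ν : S → ℝ}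
    (hp : IsKernel p) (h1 : IsPolicy π₁) (h2 : IsPolicy π₂) (hν : IsPMF ν)
    (hM : ∀ s : S, ∑ a : A, |π₁ s a - π₂ s a| ≤ M) :
    ∑ s' : S, |dnu p γ ν π₁ s' - dnu p γ ν π₂ s'| ≤ γ * M / (1 - γ) := by
  have hMnn : 0 ≤ M := by
    obtain ⟨s⟩ := (inferInstance : Nonempty S)
    exact le_trans (Finset.sum_nonneg fun a _ => abs_nonneg _) (hM s)
  have h1γ : (0:ℝ) < 1 - γ := by linarith
  have habs2 : ∀ (t : ℕ) (s' : S), |muV p π₁ ν t s' - muV p π₂ ν t s'| ≤ 2 := by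
    intro t s'
    have := abs_sub (muV p π₁ ν t s') (muV p π₂ ν t s')
    have b1 : |muV p π₁ ν t s'| ≤ 1 := by
      rw [abs_of_nonneg (muV_nonneg hp h1 hν.1 t s')]; exact muV_le_one hp h1 hν t s'
    have b2 : |muV p π₂ ν t s'| ≤ 1 := by
      rw [abs_of_nonneg (muV_nonneg hp h2 hν.1 t s')]; exact muV_le_one hp h2 hν t s'
    linarith
  have hsumD : ∀ s' : S, Summable fun t => γ ^ t * |muV p π₁ ν t s' - muV p π₂ ν t s'| :=
    fun s' => summable_geom_of_abs_le hγ0 hγ1 (B := 2) fun t => by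
      rw [abs_abs]; exact habs2 t s'
  have key : ∀ s' : S, |dnu p γ ν π₁ s' - dnu p γ ν π₂ s'| ≤
      (1 - γ) * ∑' t : ℕ, γ ^ t * |muV p π₁ ν t s' - muV p π₂ ν t s'| := by
    intro s'
    have hdiff : dnu p γ ν π₁ s' - dnu p γ ν π₂ s'
        = (1 - γ) * ∑' t : ℕ, γ ^ t * (muV p π₁ ν t s' - muV p π₂ ν t s') := by
      rw [dnu_eq hγ0 hγ1 hp h1 s', dnu_eq hγ0 hγ1 hp h2 s', ← mul_sub]
      congr 1
      rw [← Summable.tsum_sub (summable_geom_muV hγ0 hγ1 hp h1 hν s') (summable_geom_muV hγ0 hγ1 hp h2 hν s')]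
      exact tsum_congr fun t => (mul_sub _ _ _).symm
    rw [hdiff, abs_mul, abs_of_nonneg h1γ.le]
    refine mul_le_mul_of_nonneg_left ?_ h1γ.le
    refine abs_tsum_le_tsum (fun t => ?_) (hsumD s')
    rw [abs_mul, abs_pow, abs_of_nonneg hγ0]
  have hsummul : Summable fun t : ℕ => M * ((t:ℝ) * γ ^ t) :=
    ((hasSum_coe_mul_geometric_of_norm_lt_one (r := γ)
      (by rw [Real.norm_eq_abs, abs_of_nonneg hγ0]; exact hγ1)).summable).mul_left M
  have hgsum : Summable fun t : ℕ => γ ^ t * ((t:ℝ) * M) := by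
    refine hsummul.congr fun t => by ring
  calc ∑ s' : S, |dnu p γ ν π₁ s' - dnu p γ ν π₂ s'|
      ≤ ∑ s' : S, (1 - γ) * ∑' t : ℕ, γ ^ t * |muV p π₁ ν t s' - muV p π₂ ν t s'| :=
        Finset.sum_le_sum fun s' _ => key s'
    _ = (1 - γ) * ∑' t : ℕ, γ ^ t * ∑ s' : S, |muV p π₁ ν t s' - muV p π₂ ν t s'| := by
        rw [← Finset.mul_sum]
        congr 1
        rw [← Summable.tsum_finsetSum fun s' _ => hsumD s']
        refine tsum_congr fun t => ?_
        rw [Finset.mul_sum]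
    _ ≤ (1 - γ) * ∑' t : ℕ, γ ^ t * ((t:ℝ) * M) := by
        refine mul_le_mul_of_nonneg_left ?_ h1γ.le
        refine Summable.tsum_le_tsum (fun t => ?_) ?_ hgsum
        · exact mul_le_mul_of_nonneg_left (muV_diff hp h1 h2 hν hM t) (pow_nonneg hγ0 t)
        · refine hgsum.of_nonneg_of_le (fun t => mul_nonneg (pow_nonneg hγ0 t)
            (Finset.sum_nonneg fun s' _ => abs_nonneg _)) fun t =>
            mul_le_mul_of_nonneg_left (muV_diff hp h1 h2 hν hM t) (pow_nonneg hγ0 t)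
    _ = (1 - γ) * (M * (γ / (1 - γ)^2)) := by
        congr 1
        rw [show (fun t : ℕ => γ ^ t * ((t:ℝ) * M)) = fun t : ℕ => M * ((t:ℝ) * γ ^ t) by
          funext t; ring]
        rw [tsum_mul_left, (hasSum_coe_mul_geometric_of_norm_lt_one (r := γ)
          (by rw [Real.norm_eq_abs, abs_of_nonneg hγ0]; exact hγ1)).tsum_eq]
    _ = γ * M / (1 - γ) := by field_simp

theorem remainder_kl_bound (γ Rmax C : ℝ)
    (hγ0 : 0 ≤ γ) (hγ1 : γ < 1) (hR : 0 ≤ Rmax) (hC : 0 < C) :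
    ∃ cstar : ℝ, 0 < cstar ∧
      ∀ (S A : Type) [Fintype S] [Fintype A] [DecidableEq S] [DecidableEq A]
        [Nonempty S] [Nonempty A],
      ∀ (p : A → S → S → ℝ) (r : S → A → ℝ) (ν : S → ℝ),
        IsKernel p → (∀ s a, |r s a| ≤ Rmax) → IsPMF ν → (∀ s, C ≤ ν s) →
      ∀ (πold πnew : S → A → ℝ), IsPolicy πold → IsPolicy πnew →
        ((|eta2 p r γ ν πnew πold| : ℝ) : EReal) ≤
          ((cstar * γ / (1 - γ) : ℝ) : EReal) *
            ∑ s : S, ((dnu p γ ν πold s : ℝ) : EReal) * DKL (πold s) (πnew s) := by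
  have h1γ : (0:ℝ) < 1 - γ := by linarith
  refine ⟨8 * Rmax / (C * (1 - γ)^2) + 1, by positivity, ?_⟩
  intro S A iS iA dS dA nS nA p r ν hp hr hν hνC πold πnew hold hnew
  set cstar : ℝ := 8 * Rmax / (C * (1 - γ)^2) + 1 with hcstar
  set ε : S → ℝ := fun s => ∑ a : A, |πold s a - πnew s a| with hε
  obtain ⟨smax, _, hmax⟩ := Finset.exists_max_image Finset.univ ε
    ⟨Classical.arbitrary S, Finset.mem_univ _⟩
  set M : ℝ := ε smax with hMdef
  have hM : ∀ s : S, ε s ≤ M := fun s => hmax s (Finset.mem_univ s)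
  have hMnn : 0 ≤ M := Finset.sum_nonneg fun a _ => abs_nonneg _
  have hεsym : ∀ s : S, ∑ a : A, |πnew s a - πold s a| = ε s := fun s =>
    Finset.sum_congr rfl fun a _ => abs_sub_comm _ _
  have hAdv : ∀ (a : A) (s : S), |Adv p r γ πold a s| ≤ 2 * Rmax / (1 - γ) :=
    fun a s => Adv_abs_le hp hold hr hγ0 hγ1 a s
  have hdd : ∑ s : S, |dnu p γ ν πnew s - dnu p γ ν πold s| ≤ γ * M / (1 - γ) :=
    dnu_diff hγ0 hγ1 hp hnew hold hν fun s => (hεsym s).le.trans (hM s)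
  have hmaster : |eta2 p r γ ν πnew πold| ≤ (2 * Rmax / (1 - γ)) * M * (γ * M / (1 - γ)) := by
    have hAnn : (0:ℝ) ≤ 2 * Rmax / (1 - γ) := by positivity
    unfold eta2
    calc |∑ a : A, ∑ s : S, (πnew s a - πold s a) * Adv p r γ πold a s *
            (dnu p γ ν πnew s - dnu p γ ν πold s)|
        ≤ ∑ a : A, ∑ s : S, |πnew s a - πold s a| * |Adv p r γ πold a s| *
            |dnu p γ ν πnew s - dnu p γ ν πold s| := by
          refine (Finset.abs_sum_le_sum_abs _ _).trans (Finset.sum_le_sum fun a _ => ?_)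
          refine (Finset.abs_sum_le_sum_abs _ _).trans (Finset.sum_le_sum fun s _ => ?_)
          rw [abs_mul, abs_mul]
      _ = ∑ s : S, ∑ a : A, |πnew s a - πold s a| * |Adv p r γ πold a s| *
            |dnu p γ ν πnew s - dnu p γ ν πold s| := Finset.sum_comm
      _ ≤ ∑ s : S, (2 * Rmax / (1 - γ)) * M * |dnu p γ ν πnew s - dnu p γ ν πold s| := by
          refine Finset.sum_le_sum fun s _ => ?_
          calc ∑ a : A, |πnew s a - πold s a| * |Adv p r γ πold a s| *
                |dnu p γ ν πnew s - dnu p γ ν πold s|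
              ≤ ∑ a : A, |πnew s a - πold s a| * (2 * Rmax / (1 - γ)) *
                |dnu p γ ν πnew s - dnu p γ ν πold s| := by
                refine Finset.sum_le_sum fun a _ => ?_
                exact mul_le_mul_of_nonneg_right
                  (mul_le_mul_of_nonneg_left (hAdv a s) (abs_nonneg _)) (abs_nonneg _)
            _ = (∑ a : A, |πnew s a - πold s a|) * (2 * Rmax / (1 - γ)) *
                |dnu p γ ν πnew s - dnu p γ ν πold s| := by
                rw [← Finset.sum_mul, ← Finset.sum_mul]
            _ ≤ M * (2 * Rmax / (1 - γ)) * |dnu p γ ν πnew s - dnu p γ ν πold s| := by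
                refine mul_le_mul_of_nonneg_right (mul_le_mul_of_nonneg_right
                  ((hεsym s).le.trans (hM s)) hAnn) (abs_nonneg _)
            _ = (2 * Rmax / (1 - γ)) * M * |dnu p γ ν πnew s - dnu p γ ν πold s| := by
                ring
      _ = (2 * Rmax / (1 - γ)) * M * ∑ s : S, |dnu p γ ν πnew s - dnu p γ ν πold s| := by
          rw [← Finset.mul_sum]
      _ ≤ (2 * Rmax / (1 - γ)) * M * (γ * M / (1 - γ)) :=
          mul_le_mul_of_nonneg_left hdd (mul_nonneg hAnn hMnn)
  have hdnuge : ∀ s : S, (1 - γ) * C ≤ dnu p γ ν πold s := fun s =>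
    le_trans (mul_le_mul_of_nonneg_left (hνC s) h1γ.le) (dnu_ge hγ0 hγ1 hp hold hν s)
  have hdnunn : ∀ s : S, 0 ≤ dnu p γ ν πold s := fun s =>
    le_trans (by positivity) (hdnuge s)
  have hDKLnb : ∀ s : S, DKL (πold s) (πnew s) ≠ ⊥ := fun s =>
    ereal_sum_ne_bot _ _ fun a _ => by split_ifs <;> first | exact EReal.coe_ne_bot _ | simp
  by_cases hac : ∀ (s : S) (a : A), πnew s a = 0 → πold s a = 0
  · -- absolutely continuous case: everything is real-valued
    set klR : S → ℝ := fun s =>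
      ∑ a : A, if πold s a = 0 then 0 else πold s a * Real.log (πold s a / πnew s a) with hklR
    have hDKL : ∀ s : S, DKL (πold s) (πnew s) = ((klR s : ℝ) : EReal) := by
      intro s
      calc DKL (πold s) (πnew s)
          = ∑ a : A, ((if πold s a = 0 then (0:ℝ)
              else πold s a * Real.log (πold s a / πnew s a) : ℝ) : EReal) := by
            unfold DKL
            refine Finset.sum_congr rfl fun a _ => ?_
            by_cases h0 : πold s a = 0
            · simp [h0]
            · rw [if_neg h0, if_neg h0, if_neg (fun hz => h0 (hac s a hz))]
        _ = _ := (ereal_coe_sum _ _).symm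
    have hpin : ∀ s : S, (ε s)^2 ≤ 4 * klR s := fun s =>
      pinsker4 (πold s) (πnew s) (hold s).1 (hold s).2 (hnew s).1 (hnew s).2 (hac s)
    have hklnn : ∀ s : S, 0 ≤ klR s := fun s => by nlinarith [hpin s, sq_nonneg (ε s)]
    have hRHS : ((cstar * γ / (1 - γ) : ℝ) : EReal) *
        ∑ s : S, ((dnu p γ ν πold s : ℝ) : EReal) * DKL (πold s) (πnew s)
        = (((cstar * γ / (1 - γ)) * ∑ s : S, dnu p γ ν πold s * klR s : ℝ) : EReal) := by
      rw [show ∑ s : S, ((dnu p γ ν πold s : ℝ) : EReal) * DKL (πold s) (πnew s)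
          = ∑ s : S, (((dnu p γ ν πold s * klR s : ℝ)) : EReal) from
        Finset.sum_congr rfl fun s _ => by rw [hDKL s, ← EReal.coe_mul]]
      rw [← ereal_coe_sum, ← EReal.coe_mul]
    rw [hRHS, EReal.coe_le_coe_iff]
    have hsum_ge : dnu p γ ν πold smax * klR smax ≤ ∑ s : S, dnu p γ ν πold s * klR s :=
      Finset.single_le_sum (fun s _ => mul_nonneg (hdnunn s) (hklnn s)) (Finset.mem_univ smax)
    have hterm : (1 - γ) * C * (M^2 / 4) ≤ dnu p γ ν πold smax * klR smax := by
      have h4 : M^2 / 4 ≤ klR smax := by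
        have := hpin smax
        rw [← hMdef] at this
        linarith
      exact mul_le_mul (hdnuge smax) h4 (by positivity) (hdnunn smax)
    have e1 : (cstar * γ / (1 - γ)) * ((1 - γ) * C * (M^2 / 4))
        = 2 * Rmax * γ * M^2 / (1 - γ)^2 + γ * C * M^2 / 4 := by
      rw [hcstar]; field_simp; ring
    have e2 : (2 * Rmax / (1 - γ)) * M * (γ * M / (1 - γ)) = 2 * Rmax * γ * M^2 / (1 - γ)^2 := by
      field_simp
    have hcγnn : (0:ℝ) ≤ cstar * γ / (1 - γ) := by rw [hcstar]; positivity
    calc |eta2 p r γ ν πnew πold| ≤ (2 * Rmax / (1 - γ)) * M * (γ * M / (1 - γ)) := hmaster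
      _ = 2 * Rmax * γ * M^2 / (1 - γ)^2 := e2
      _ ≤ (cstar * γ / (1 - γ)) * ((1 - γ) * C * (M^2 / 4)) := by
          rw [e1]; have : (0:ℝ) ≤ γ * C * M^2 / 4 := by positivity
          linarith
      _ ≤ (cstar * γ / (1 - γ)) * (dnu p γ ν πold smax * klR smax) :=
          mul_le_mul_of_nonneg_left hterm hcγnn
      _ ≤ (cstar * γ / (1 - γ)) * ∑ s : S, dnu p γ ν πold s * klR s :=
          mul_le_mul_of_nonneg_left hsum_ge hcγnn
  · push_neg at hac
    obtain ⟨s₀, a₀, hz, hnz⟩ := hac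
    by_cases hγz : γ = 0
    · subst hγz
      have heta0 : eta2 p r 0 ν πnew πold = 0 := by
        have h := hmaster
        have h0 : (2 * Rmax / (1 - 0) * M * (0 * M / (1 - 0)) : ℝ) = 0 := by ring
        rw [h0] at h
        exact abs_eq_zero.mp (le_antisymm h (abs_nonneg _))
      rw [heta0]
      have hc0 : ((cstar * 0 / (1 - 0) : ℝ) : EReal) = (0 : EReal) := by norm_num
      rw [hc0, zero_mul]
      simp
    · have hγpos : 0 < γ := lt_of_le_of_ne hγ0 (Ne.symm hγz)
      have htop : DKL (πold s₀) (πnew s₀) = ⊤ := by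
        unfold DKL
        refine ereal_sum_eq_top Finset.univ _ (Finset.mem_univ a₀) ?_
          (fun a _ => by split_ifs <;> first | exact EReal.coe_ne_bot _ | simp)
        rw [if_neg hnz, if_pos hz]
      have hdpos : ∀ s : S, (0:ℝ) < dnu p γ ν πold s := fun s =>
        lt_of_lt_of_le (by positivity) (hdnuge s)
      have hterm_nb : ∀ s : S, ((dnu p γ ν πold s : ℝ) : EReal) * DKL (πold s) (πnew s) ≠ ⊥ :=
        fun s => ereal_coe_mul_ne_bot (hdnunn s) (hDKLnb s)
      have hsumtop : ∑ s : S, ((dnu p γ ν πold s : ℝ) : EReal) * DKL (πold s) (πnew s) = ⊤ := by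
        refine ereal_sum_eq_top Finset.univ _ (Finset.mem_univ s₀) ?_ (fun s _ => hterm_nb s)
        rw [htop]
        exact EReal.mul_top_of_pos (by exact_mod_cast hdpos s₀)
      rw [hsumtop, EReal.mul_top_of_pos (by
        rw [hcstar]
        have : (0:ℝ) < (8 * Rmax / (C * (1 - γ)^2) + 1) * γ / (1 - γ) := by positivity
        exact_mod_cast this)]
      exact le_top

end VEPO
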